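/- For the weighted max-based semantics with all degrees known, the complete attack-inference decision problem is characterized by a local condition: a set of attacks realizing S exists if and only if for every argument a, (i) w(a) = 0 ↔ S(a) = 0, and (ii) if S(a) ≠ 0 and w(a) ≠ S(a) then there exists b ∈ A with w(a)/S(a) = 1 + S(b). -/

import Mathlib

def att {A : Type*} [Fintype A] [DecidableEq A] (D : Finset (A × A)) (a : A) : Finset A :=
  Finset.univ.filter (fun b => (b, a) ∈ D)

noncomputable def maxDeg {A : Type*} (S : A → ℝ) (s : Finset A) : ℝ :=
  Finset.fold max 0 S s

lemma maxDeg_nonneg {A : Type*} (S : A → ℝ) (s : Finset A) : 0 ≤ maxDeg S s := by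
  unfold maxDeg
  induction s using Finset.cons_induction with
  | empty => simp
  | cons a s ha ih =>
    rw [Finset.fold_cons]
    exact le_max_of_le_right ih

lemma maxDeg_cases {A : Type*} (S : A → ℝ) (hS : ∀ a, 0 ≤ S a) (s : Finset A) :
    maxDeg S s = 0 ∨ ∃ b ∈ s, maxDeg S s = S b := by
  unfold maxDeg
  induction s using Finset.cons_induction with
  | empty => simp
  | cons a s ha ih =>
    rw [Finset.fold_cons]
    rcases le_total (S a) (Finset.fold max 0 S s) with h | h
    · rw [max_eq_right h]
      rcases ih with h0 | ⟨b, hb, hb'⟩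
      · exact Or.inl h0
      · exact Or.inr ⟨b, Finset.mem_cons_of_mem hb, hb'⟩
    · rw [max_eq_left h]
      exact Or.inr ⟨a, Finset.mem_cons_self a s, rfl⟩

lemma maxDeg_singleton {A : Type*} (S : A → ℝ) (hS : ∀ a, 0 ≤ S a) (b : A) :
    maxDeg S {b} = S b := by
  unfold maxDeg
  simp only [Finset.fold_singleton]
  exact max_eq_left (hS b)

/-- Local characterization of the complete attack-inference decision problem
for the weighted max-based semantics: an attack set realizing `S` exists iff
for every argument `a`, (i) `w a = 0 ↔ S a = 0` and (ii) whenever `S a ≠ 0`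
and `w a ≠ S a`, there is some `b` with `w a / S a = 1 + S b`. -/
theorem mb_decision_characterization {A : Type*} [Fintype A] [DecidableEq A]
    (w S : A → ℝ)
    (hw : ∀ a, 0 ≤ w a ∧ w a ≤ 1) (hS : ∀ a, 0 ≤ S a ∧ S a ≤ 1) :
    (∃ D : Finset (A × A), ∀ a, S a = w a / (1 + maxDeg S (att D a))) ↔
    (∀ a, (w a = 0 ↔ S a = 0) ∧
      (S a ≠ 0 → w a ≠ S a → ∃ b, w a / S a = 1 + S b)) := by
  classical
  have hS0 : ∀ a, 0 ≤ S a := fun a => (hS a).1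
  constructor
  · rintro ⟨D, hD⟩ a
    set M := maxDeg S (att D a) with hM
    have hMnn : 0 ≤ M := maxDeg_nonneg S _
    have hMpos : (0:ℝ) < 1 + M := by linarith
    have hMne : (1:ℝ) + M ≠ 0 := ne_of_gt hMpos
    have key : S a * (1 + M) = w a := by
      rw [hD a, ← hM]; field_simp
    constructor
    · constructor
      · intro h; rw [hD a, h, zero_div]
      · intro h; rw [← key, h, zero_mul]
    · intro hSa hwa
      have hMne0 : M ≠ 0 := by
        intro h0
        apply hwa
        rw [← key, h0]; ring
      rcases maxDeg_cases S hS0 (att D a) with h0 | ⟨b, _, hb⟩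
      · exact absurd h0 hMne0
      · refine ⟨b, ?_⟩
        rw [← key, ← hb]
        field_simp
        rw [hM]
  · intro h
    choose f hf using fun a => (h a).2
    -- D : for each a needing an attacker, attack by chosen b
    refine ⟨Finset.univ.filter (fun p : A × A =>
      ∃ (h1 : S p.2 ≠ 0) (h2 : w p.2 ≠ S p.2), p.1 = f p.2 h1 h2), fun a => ?_⟩
    by_cases h1 : S a = 0
    · have hw0 : w a = 0 := (h a).1.mpr h1
      have : att (Finset.univ.filter (fun p : A × A =>
          ∃ (h1 : S p.2 ≠ 0) (h2 : w p.2 ≠ S p.2), p.1 = f p.2 h1 h2)) a = ∅ := by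
        ext b
        simp [att, h1]
      rw [this, h1, hw0]
      simp [maxDeg]
    · by_cases h2 : w a = S a
      · have : att (Finset.univ.filter (fun p : A × A =>
            ∃ (h1 : S p.2 ≠ 0) (h2 : w p.2 ≠ S p.2), p.1 = f p.2 h1 h2)) a = ∅ := by
          ext b
          simp [att, h2]
        rw [this, h2]
        simp [maxDeg]
      · have hatt : att (Finset.univ.filter (fun p : A × A =>
            ∃ (h1 : S p.2 ≠ 0) (h2 : w p.2 ≠ S p.2), p.1 = f p.2 h1 h2)) a = {f a h1 h2} := by
          ext b
          simp only [att, Finset.mem_filter, Finset.mem_univ, true_and, Finset.mem_singleton]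
          constructor
          · rintro ⟨_, _, hb⟩; exact hb
          · rintro rfl; exact ⟨h1, h2, rfl⟩
        rw [hatt, maxDeg_singleton S hS0]
        have := hf a h1 h2
        have hpos : 0 < 1 + S (f a h1 h2) := by
          have := hS0 (f a h1 h2); linarith
        rw [div_eq_iff h1] at this
        rw [this, mul_comm, mul_div_assoc, div_self (ne_of_gt hpos), mul_one]
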